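/- Let V : ℝ^d \ {0} → (0,∞) be C¹ and homogeneous of degree −α with α ∈ (0,2), and let x : (a,b) → ℝ^d \ {0} be a C² solution of ẍ = ∇V(x) satisfying ½|ẋ|² = V(x). Then the action satisfies ∫_a^b (½|ẋ(t)|² + V(x(t))) dt = (2/(2−α)) [x(t)·ẋ(t)]_a^b, i.e. A([a,b];x) = (1/α*)(x(b)·ẋ(b) − x(a)·ẋ(a)) with α* = (2−α)/2. -/

import Mathlib

open Set intervalIntegral

lemma euler_identity {d : ℕ} (α : ℝ)
    (V : EuclideanSpace ℝ (Fin d) → ℝ)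
    (hV : ContDiffOn ℝ 1 V {x | x ≠ 0})
    (hhom : ∀ x : EuclideanSpace ℝ (Fin d), x ≠ 0 → ∀ l : ℝ, 0 < l →
      V (l • x) = l ^ (-α) * V x)
    (y : EuclideanSpace ℝ (Fin d)) (hy : y ≠ 0) :
    (inner ℝ y (gradient V y) : ℝ) = -α * V y := by
  have hopen : IsOpen {x : EuclideanSpace ℝ (Fin d) | x ≠ 0} :=
    isOpen_compl_singleton
  have hdiff : DifferentiableAt ℝ V y :=
    (hV.contDiffAt (hopen.mem_nhds hy)).differentiableAt one_ne_zero
  -- derivative of φ l = V (l • y) at l = 1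
  have hsm : HasDerivAt (fun l : ℝ => l • y) y 1 := by
    simpa using (hasDerivAt_id (1:ℝ)).smul_const y
  have h1 : HasDerivAt (fun l : ℝ => V (l • y)) (fderiv ℝ V y y) 1 := by
    have hF : HasFDerivAt V (fderiv ℝ V y) ((1:ℝ) • y) := by
      simpa using hdiff.hasFDerivAt
    exact hF.comp_hasDerivAt 1 hsm
  have h2 : HasDerivAt (fun l : ℝ => V (l • y)) (-α * V y) 1 := by
    have hr : HasDerivAt (fun l : ℝ => l ^ (-α) * V y) (-α * V y) 1 := by
      have := (Real.hasDerivAt_rpow_const (x := (1:ℝ)) (p := -α)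
        (Or.inl one_ne_zero)).mul_const (V y)
      simpa using this
    apply hr.congr_of_eventuallyEq
    filter_upwards [eventually_gt_nhds (show (0:ℝ) < 1 by norm_num)] with l hl
    exact hhom y hy l hl
  have heq : fderiv ℝ V y y = -α * V y := h1.unique h2
  have hgrad : (inner ℝ (gradient V y) y : ℝ) = fderiv ℝ V y y := by
    simp [gradient]
  rw [real_inner_comm, hgrad, heq]

theorem stmt_6 {d : ℕ} (α a b : ℝ) (hα : α ∈ Set.Ioo (0 : ℝ) 2) (hab : a < b)
    (V : EuclideanSpace ℝ (Fin d) → ℝ)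
    (hV : ContDiffOn ℝ 1 V {x | x ≠ 0})
    (hVpos : ∀ x : EuclideanSpace ℝ (Fin d), x ≠ 0 → 0 < V x)
    (hhom : ∀ x : EuclideanSpace ℝ (Fin d), x ≠ 0 → ∀ l : ℝ, 0 < l →
      V (l • x) = l ^ (-α) * V x)
    (x x' : ℝ → EuclideanSpace ℝ (Fin d))
    (hx0 : ∀ t ∈ Set.Icc a b, x t ≠ 0)
    (hx : ∀ t ∈ Set.Icc a b, HasDerivAt x (x' t) t)
    (hx' : ∀ t ∈ Set.Icc a b, HasDerivAt x' (gradient V (x t)) t)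
    (henergy : ∀ t ∈ Set.Icc a b, ‖x' t‖ ^ 2 / 2 = V (x t)) :
    (∫ t in a..b, (‖x' t‖ ^ 2 / 2 + V (x t))) =
      (2 / (2 - α)) * ((inner ℝ (x b) (x' b) : ℝ) - (inner ℝ (x a) (x' a) : ℝ)) := by
  have huIcc : Set.uIcc a b = Set.Icc a b := Set.uIcc_of_le hab.le
  have hα2 : (2 : ℝ) - α ≠ 0 := by have := hα.2; linarith
  -- derivative of t ↦ ⟪x t, x' t⟫
  have key : ∀ t ∈ Set.Icc a b,
      HasDerivAt (fun t => (inner ℝ (x t) (x' t) : ℝ)) ((2 - α) * V (x t)) t := by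
    intro t ht
    have h := (hx t ht).inner ℝ (hx' t ht)
    have e1 : (inner ℝ (x t) (gradient V (x t)) : ℝ) = -α * V (x t) :=
      euler_identity α V hV hhom (x t) (hx0 t ht)
    have e2 : (inner ℝ (x' t) (x' t) : ℝ) = ‖x' t‖ ^ 2 := real_inner_self_eq_norm_sq _
    have e3 : ‖x' t‖ ^ 2 = 2 * V (x t) := by
      have := henergy t ht; linarith
    exact h.congr_deriv (by rw [e1, e2, e3]; ring)
  -- continuity / integrability
  have hxcont : ContinuousOn x (Set.Icc a b) := fun t ht =>
    (hx t ht).continuousAt.continuousWithinAt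
  have hVcont : ContinuousOn (fun t => V (x t)) (Set.Icc a b) :=
    hV.continuousOn.comp hxcont (fun t ht => hx0 t ht)
  have hVint : IntervalIntegrable (fun t => V (x t)) MeasureTheory.volume a b := by
    apply ContinuousOn.intervalIntegrable; rwa [huIcc]
  have hftc : (∫ t in a..b, (2 - α) * V (x t)) =
      (inner ℝ (x b) (x' b) : ℝ) - (inner ℝ (x a) (x' a) : ℝ) := by
    apply intervalIntegral.integral_eq_sub_of_hasDerivAt
    · intro t ht; exact key t (huIcc ▸ ht)
    · exact hVint.const_mul _
  have hcongr : (∫ t in a..b, (‖x' t‖ ^ 2 / 2 + V (x t))) =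
      ∫ t in a..b, 2 * V (x t) := by
    apply intervalIntegral.integral_congr
    intro t ht
    have := henergy t (huIcc ▸ ht)
    simp only; linarith
  rw [hcongr, ← hftc, intervalIntegral.integral_const_mul,
    intervalIntegral.integral_const_mul]
  field_simp
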